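/- Let N = 2 and Ω = (0,π) × (0,π), and let u(x,y) = sin(x)sin(y) be the first Dirichlet eigenfunction. Then the Hessian of u is negative semidefinite at (x,y) ∈ Ω if and only if |x − π/2| + |y − π/2| ≤ π/2. In particular, u is not concave on Ω. -/
import Mathlib


open Set Real

theorem stmt_19 (u : ℝ × ℝ → ℝ) (hu : ∀ p : ℝ × ℝ, u p = Real.sin p.1 * Real.sin p.2) :
    (∀ x ∈ Set.Ioo (0:ℝ) π, ∀ y ∈ Set.Ioo (0:ℝ) π,
      ((∀ v₁ v₂ : ℝ,
          (-(Real.sin x * Real.sin y)) * v₁^2 +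
            2 * (Real.cos x * Real.cos y) * v₁ * v₂ +
            (-(Real.sin x * Real.sin y)) * v₂^2 ≤ 0) ↔
        |x - π/2| + |y - π/2| ≤ π/2)) ∧
      ¬ ConcaveOn ℝ (Set.Ioo 0 π ×ˢ Set.Ioo 0 π) u := by
  constructor
  · intro x hx y hy
    have hax : |x - π/2| < π/2 := by
      rw [abs_lt]; constructor <;> [linarith [hx.1]; linarith [hx.2]]
    have hay : |y - π/2| < π/2 := by
      rw [abs_lt]; constructor <;> [linarith [hy.1]; linarith [hy.2]]
    have hsx : Real.sin x = Real.cos (x - π/2) := (Real.cos_sub_pi_div_two x).symm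
    have hsy : Real.sin y = Real.cos (y - π/2) := (Real.cos_sub_pi_div_two y).symm
    have hcx : Real.cos x = -Real.sin (x - π/2) := by
      rw [Real.sin_sub_pi_div_two]; ring
    have hcy : Real.cos y = -Real.sin (y - π/2) := by
      rw [Real.sin_sub_pi_div_two]; ring
    have hsabs : ∀ t : ℝ, |t| < π/2 → Real.sin |t| = |Real.sin t| := by
      intro t ht
      have hpi := Real.pi_pos
      rcases le_or_gt 0 t with h1 | h1
      · rw [abs_of_nonneg h1,
          abs_of_nonneg (Real.sin_nonneg_of_nonneg_of_le_pi h1 (by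
            rw [abs_of_nonneg h1] at ht; linarith))]
      · rw [abs_of_neg h1, Real.sin_neg]
        rw [abs_of_nonpos]
        have : Real.sin (-t) ≥ 0 := Real.sin_nonneg_of_nonneg_of_le_pi (by linarith) (by
          rw [abs_of_neg h1] at ht; linarith)
        rw [Real.sin_neg] at this; linarith
    have hkey : Real.cos (|x - π/2| + |y - π/2|) =
        Real.sin x * Real.sin y - |Real.cos x * Real.cos y| := by
      rw [Real.cos_add, Real.cos_abs, Real.cos_abs, hsx, hsy, hcx, hcy,
        hsabs _ hax, hsabs _ hay, abs_mul, abs_neg, abs_neg, ← abs_mul]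
    constructor
    · intro h
      have h1 := h 1 1
      have h2 := h 1 (-1)
      have habs : |Real.cos x * Real.cos y| ≤ Real.sin x * Real.sin y := by
        rw [abs_le]; constructor <;> nlinarith
      by_contra hcon
      push_neg at hcon
      have hneg : Real.cos (|x - π/2| + |y - π/2|) < 0 :=
        Real.cos_neg_of_pi_div_two_lt_of_lt hcon (by
          have := abs_nonneg (x - π/2); linarith [Real.pi_pos])
      rw [hkey] at hneg
      linarith
    · intro hle v₁ v₂
      have h0 : 0 ≤ Real.cos (|x - π/2| + |y - π/2|) :=
        Real.cos_nonneg_of_mem_Icc ⟨by linarith [abs_nonneg (x - π/2), abs_nonneg (y - π/2), Real.pi_pos], hle⟩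
      rw [hkey] at h0
      have h1 := le_abs_self (Real.cos x * Real.cos y)
      have h2 := neg_abs_le (Real.cos x * Real.cos y)
      nlinarith [sq_nonneg (v₁ - v₂), sq_nonneg (v₁ + v₂), sq_nonneg v₁, sq_nonneg v₂,
        mul_nonneg (sub_nonneg.2 h0) (add_nonneg (sq_nonneg v₁) (sq_nonneg v₂)),
        mul_nonneg (sub_nonneg.2 h1) (sq_nonneg (v₁ - v₂)),
        mul_nonneg (sub_nonneg.2 h2) (sq_nonneg (v₁ + v₂))]
  · intro h
    have hpi := Real.pi_pos
    have hp : ((π/12 : ℝ), (π/12 : ℝ)) ∈ Set.Ioo (0:ℝ) π ×ˢ Set.Ioo (0:ℝ) π := by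
      constructor <;> constructor <;> simp <;> linarith
    have hq : ((π/4 : ℝ), (π/4 : ℝ)) ∈ Set.Ioo (0:ℝ) π ×ˢ Set.Ioo (0:ℝ) π := by
      constructor <;> constructor <;> simp <;> linarith
    have := h.2 hp hq (by norm_num : (0:ℝ) ≤ 1/2) (by norm_num : (0:ℝ) ≤ 1/2) (by norm_num)
    rw [hu, hu, hu] at this
    have hmid : ((1:ℝ)/2) • ((π/12 : ℝ), (π/12 : ℝ)) + ((1:ℝ)/2) • ((π/4 : ℝ), (π/4 : ℝ))
        = ((π/6 : ℝ), (π/6 : ℝ)) := by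
      simp [Prod.ext_iff]; ring
    rw [hmid] at this
    simp only at this
    have e6 : Real.sin (π/6) = 1/2 := Real.sin_pi_div_six
    have e4 : Real.sin (π/4) = Real.sqrt 2 / 2 := Real.sin_pi_div_four
    have e12 : Real.sin (π/12) * Real.sin (π/12) = 1/2 - Real.sqrt 3 / 4 := by
      have := Real.sin_sq_eq_half_sub (π/12)
      rw [show 2*(π/12) = π/6 by ring, Real.cos_pi_div_six] at this
      nlinarith [this]
    have h2 : Real.sqrt 2 * Real.sqrt 2 = 2 := Real.mul_self_sqrt (by norm_num)
    have h3 : Real.sqrt 3 * Real.sqrt 3 = 3 := Real.mul_self_sqrt (by norm_num)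
    have h3lt : Real.sqrt 3 < 2 := by nlinarith [Real.sqrt_nonneg 3]
    simp only [smul_eq_mul] at this
    rw [e6, e4, e12] at this
    nlinarith [this]
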